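/- Corollary (Logarithmic utility: equilibrium consumption grows faster). Let u(c) = ln c, so φ(v) = e^v, D = ℝ, and consumption is c_t = exp(v_t). Let v^E be a maximizer of Problem IV (for fixed initial type δ₁) and v^B a maximizer of the efficient problem, and define equilibrium consumption c^E_t := exp(v^E_t) and efficient consumption c^B_t := exp(v^B_t). Then for every t ∈ {1,…,T−1}, the growth ratio E_F[c^E_{t+1}(δ̃₂,…,δ̃_{t+1})] / E_F[c^E_t(δ̃₂,…,δ̃_t)] is greater than or equal to E_F[c^B_{t+1}(δ₁,δ̃₂,…,δ̃_{t+1})] / E_F[c^B_t(δ₁,δ̃₂,…,δ̃_t)]; the two ratios are equal for all t if p = q; and for t ≥ 2 the inequality is strict if p ≠ q (the agent is strictly more optimistic). -/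

import Mathlib

/-- A policy for Problem IV with horizon `T` and `N` types, for a fixed initial type.
Paths `ω : Fin (T-2) → Fin N` record the type draws at dates `2,…,T-1` (coordinate `s`
is the draw at date `s+2`).  `v t ω` is the date-`t` utility; `adapted` says that for
`t ≤ T-1` it depends only on the draws at dates `2,…,t` (so `v 1` is constant and
`v T` depends on the draws at dates `2,…,T-1`). -/
structure PolicyIV (T N : ℕ) where
  v : ℕ → (Fin (T - 2) → Fin N) → ℝ
  adapted : ∀ t : ℕ, t ≤ T - 1 → ∀ ω ω' : Fin (T - 2) → Fin N,
    (∀ s : Fin (T - 2), (s : ℕ) + 2 ≤ t → ω s = ω' s) → v t ω = v t ω'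

/-- Splice two paths: keep the draws of `ω` at dates `≤ t` and of `ω'` at dates `> t`. -/
def splice (T N : ℕ) (t : ℕ) (ω ω' : Fin (T - 2) → Fin N) : Fin (T - 2) → Fin N :=
  fun s => if (s : ℕ) + 2 ≤ t then ω s else ω' s

/-- Expectation over paths with i.i.d. coordinate weights `r`. -/
noncomputable def Epath (T N : ℕ) (r : Fin N → ℝ) (f : (Fin (T - 2) → Fin N) → ℝ) : ℝ :=
  ∑ ω : Fin (T - 2) → Fin N, (∏ s, r (ω s)) * f ω

/-- Discounting of date-`t` utility from date 2: `Π_{s=2}^{t-1} δ̃_s`. -/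
noncomputable def discIV (T N : ℕ) (δ : Fin N → ℝ) (t : ℕ) (ω : Fin (T - 2) → Fin N) : ℝ :=
  ∏ s : Fin (T - 2), if (s : ℕ) + 2 < t then δ (ω s) else 1

/-- Discounting of date-`τ` utility from date `t+1`: `Π_{s=t+1}^{τ-1} δ̃_s`. -/
noncomputable def discCont (T N : ℕ) (δ : Fin N → ℝ) (t τ : ℕ) (ω : Fin (T - 2) → Fin N) : ℝ :=
  ∏ s : Fin (T - 2), if t + 1 ≤ (s : ℕ) + 2 ∧ (s : ℕ) + 2 < τ then δ (ω s) else 1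

/-- The discount factor realised at date `t` along the path `ω` (for `2 ≤ t ≤ T-1`). -/
noncomputable def deltaAt (T N : ℕ) (δ : Fin N → ℝ) (t : ℕ) (ω : Fin (T - 2) → Fin N) : ℝ :=
  ∏ s : Fin (T - 2), if (s : ℕ) + 2 = t then δ (ω s) else 1

/-- The agent's expected discounted continuation utility from date `t+1` onwards,
after the history and report recorded in `ω` up to date `t`, with agent beliefs `q`:
`E_A[Σ_{τ=t+1}^T (Π_{s=t+1}^{τ-1} δ̃_s) v_τ]`. -/
noncomputable def contA (T N : ℕ) (δ q : Fin N → ℝ)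
    (v : ℕ → (Fin (T - 2) → Fin N) → ℝ) (t : ℕ) (ω : Fin (T - 2) → Fin N) : ℝ :=
  Epath T N q (fun ω' => ∑ τ ∈ Finset.Icc (t + 1) T,
    discCont T N δ t τ (splice T N t ω ω') * v τ (splice T N t ω ω'))

/-- The agent's expected payoff: `v₁ + δ₁·E_A[Σ_{t=2}^T (Π_{s=2}^{t-1} δ̃_s) v_t]`. -/
noncomputable def payoffIV (T N : ℕ) (δ q : Fin N → ℝ) (δ1 : ℝ) (P : PolicyIV T N) : ℝ :=
  Epath T N q (fun ω => P.v 1 ω + δ1 * ∑ t ∈ Finset.Icc 2 T, discIV T N δ t ω * P.v t ω)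

/-- The firm's expected discounted cost: `φ(v₁) + E_F[Σ_{t=2}^T φ(v_t)/R^(t-1)]`. -/
noncomputable def costIV (T N : ℕ) (p : Fin N → ℝ) (φ : ℝ → ℝ) (R : ℝ) (P : PolicyIV T N) : ℝ :=
  Epath T N p (fun ω => φ (P.v 1 ω) + ∑ t ∈ Finset.Icc 2 T, φ (P.v t ω) / R ^ (t - 1))

/-- All incentive constraints `IC(t,H,δ,δ̂)`: at every date `t ∈ {2,…,T-1}` and after
any history (the common prefix of `ω` and `ω'`), the agent with true date-`t` type
(the date-`t` coordinate of `ω`) prefers its own report to any other report (the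
date-`t` coordinate of `ω'`). -/
def ICIV (T N : ℕ) (δ q : Fin N → ℝ) (P : PolicyIV T N) : Prop :=
  ∀ t : ℕ, 2 ≤ t → t ≤ T - 1 → ∀ ω ω' : Fin (T - 2) → Fin N,
    (∀ s : Fin (T - 2), (s : ℕ) + 2 < t → ω s = ω' s) →
    P.v t ω' + deltaAt T N δ t ω * contA T N δ q P.v t ω' ≤
      P.v t ω + deltaAt T N δ t ω * contA T N δ q P.v t ω

/-- Feasibility for Problem IV: utilities bounded below by `m = u 0`, the firm
break-even condition, and all incentive constraints. -/
def FeasIV (T N : ℕ) (δ p q : Fin N → ℝ) (φ : ℝ → ℝ) (R I m : ℝ) (P : PolicyIV T N) : Prop :=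
  (∀ t ∈ Finset.Icc 1 T, ∀ ω, m ≤ P.v t ω) ∧
  costIV T N p φ R P ≤ I ∧ ICIV T N δ q P

/-- Feasibility for Problem IV with utilities in the domain `D` of `φ`. -/
def FeasIVD (T N : ℕ) (δ p q : Fin N → ℝ) (φ : ℝ → ℝ) (R I : ℝ) (D : Set ℝ)
    (P : PolicyIV T N) : Prop :=
  (∀ t ∈ Finset.Icc 1 T, ∀ ω, P.v t ω ∈ D) ∧
  costIV T N p φ R P ≤ I ∧ ICIV T N δ q P

/-- A policy for the efficient problem: paths `ω : Fin (T-1) → Fin N` record the type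
draws at dates `1,…,T-1` (coordinate `s` is the draw at date `s+1`); `v t` depends
only on the draws at dates `1,…,t` for `t ≤ T-1`. -/
structure PolicyB (T N : ℕ) where
  v : ℕ → (Fin (T - 1) → Fin N) → ℝ
  adapted : ∀ t : ℕ, t ≤ T - 1 → ∀ ω ω' : Fin (T - 1) → Fin N,
    (∀ s : Fin (T - 1), (s : ℕ) < t → ω s = ω' s) → v t ω = v t ω'

/-- Expectation over efficient-problem paths with i.i.d. coordinate weights `p`. -/
noncomputable def EpathB (T N : ℕ) (p : Fin N → ℝ) (f : (Fin (T - 1) → Fin N) → ℝ) : ℝ :=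
  ∑ ω : Fin (T - 1) → Fin N, (∏ s, p (ω s)) * f ω

/-- Discounting of date-`t` utility in the efficient problem: `Π_{s=1}^{t-1} δ̃_s`. -/
noncomputable def discBpol (T N : ℕ) (δ : Fin N → ℝ) (t : ℕ) (ω : Fin (T - 1) → Fin N) : ℝ :=
  ∏ s : Fin (T - 1), if (s : ℕ) + 1 < t then δ (ω s) else 1

/-- Splice two efficient-problem paths: keep the draws of `ω` at dates `< t` and
fresh draws `ω'` at dates `≥ t`. -/
def spliceB (T N : ℕ) (t : ℕ) (ω ω' : Fin (T - 1) → Fin N) : Fin (T - 1) → Fin N :=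
  fun s => if (s : ℕ) + 1 < t then ω s else ω' s

/-- Objective of the efficient problem. -/
noncomputable def objBpol (T N : ℕ) (δ p : Fin N → ℝ) (P : PolicyB T N) : ℝ :=
  EpathB T N p (fun ω => ∑ t ∈ Finset.Icc 1 T, discBpol T N δ t ω * P.v t ω)

/-- Cost of the efficient problem. -/
noncomputable def costBpol (T N : ℕ) (p : Fin N → ℝ) (φ : ℝ → ℝ) (R : ℝ) (P : PolicyB T N) : ℝ :=
  EpathB T N p (fun ω => ∑ t ∈ Finset.Icc 1 T, φ (P.v t ω) / R ^ (t - 1))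

/-- Feasibility for the efficient problem with utilities in the domain `D`. -/
def FeasBD (T N : ℕ) (p : Fin N → ℝ) (φ : ℝ → ℝ) (R I : ℝ) (D : Set ℝ)
    (P : PolicyB T N) : Prop :=
  (∀ t ∈ Finset.Icc 1 T, ∀ ω, P.v t ω ∈ D) ∧ costBpol T N p φ R P ≤ I
-- ===================== auxiliary machinery =====================
open Finset

section Generic

lemma sum_pi_prod {k N : ℕ} (g : Fin k → Fin N → ℝ) :
    (∑ ω : Fin k → Fin N, ∏ s, g s (ω s)) = ∏ s, ∑ n, g s n :=
  (Fintype.prod_sum g).symm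

lemma prod_factor_at {k : ℕ} (f g : Fin k → ℝ) (s0 : Fin k) (A : ℝ)
    (h1 : ∀ s, s ≠ s0 → f s = g s) (h2 : f s0 = A * g s0) :
    ∏ s, f s = A * ∏ s, g s := by
  rw [← Finset.mul_prod_erase univ f (mem_univ s0),
    ← Finset.mul_prod_erase univ g (mem_univ s0), h2, mul_assoc]
  congr 1
  congr 1
  exact Finset.prod_congr rfl fun s hs => h1 s (Finset.ne_of_mem_erase hs)

lemma foc_core (b1 b2 r : ℝ)
    (h : ∀ᶠ ε in nhds (0:ℝ), b1 * ε + b2 * Real.log (1 + r * (1 - Real.exp ε)) ≤ 0) :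
    b1 = b2 * r := by
  set g : ℝ → ℝ := fun ε => b1 * ε + b2 * Real.log (1 + r * (1 - Real.exp ε)) with hg
  have hmax : IsLocalMax g 0 := by
    have h0 : g 0 = 0 := by simp [hg]
    filter_upwards [h] with ε hε
    simpa [h0] using hε
  have hu : HasDerivAt (fun ε : ℝ => 1 + r * (1 - Real.exp ε)) (-r) 0 := by
    have := (Real.hasDerivAt_exp 0)
    have h1 : HasDerivAt (fun ε : ℝ => 1 - Real.exp ε) (-1) 0 := by
      simpa using this.const_sub (1:ℝ)
    have h2 := h1.const_mul r
    simpa using h2.const_add (1:ℝ)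
  have hlog : HasDerivAt (fun ε : ℝ => Real.log (1 + r * (1 - Real.exp ε))) (-r) 0 := by
    have hne : (1 + r * (1 - Real.exp 0)) ≠ 0 := by simp
    simpa using hu.log hne
  have hd : HasDerivAt g (b1 + b2 * (-r)) 0 := by
    have := ((hasDerivAt_id (0:ℝ)).const_mul b1).add (hlog.const_mul b2)
    exact this.congr_deriv (by ring)
  have := hmax.hasDerivAt_eq_zero hd
  nlinarith [this]

/-- generic expectation over i.i.d. paths -/
noncomputable def EG (k N : ℕ) (r : Fin N → ℝ) (f : (Fin k → Fin N) → ℝ) : ℝ :=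
  ∑ ω : Fin k → Fin N, (∏ s, r (ω s)) * f ω

lemma EG_add (k N : ℕ) (r : Fin N → ℝ) (f g : (Fin k → Fin N) → ℝ) :
    EG k N r (fun ω => f ω + g ω) = EG k N r f + EG k N r g := by
  unfold EG
  rw [← Finset.sum_add_distrib]
  exact Finset.sum_congr rfl fun ω _ => mul_add _ _ _

lemma EG_cmul (k N : ℕ) (r : Fin N → ℝ) (c : ℝ) (f : (Fin k → Fin N) → ℝ) :
    EG k N r (fun ω => c * f ω) = c * EG k N r f := by
  unfold EG
  rw [Finset.mul_sum]
  exact Finset.sum_congr rfl fun ω _ => by ring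

lemma EG_finsum (k N : ℕ) (r : Fin N → ℝ) (F : Finset ℕ) (g : ℕ → (Fin k → Fin N) → ℝ) :
    EG k N r (fun ω => ∑ t ∈ F, g t ω) = ∑ t ∈ F, EG k N r (g t) := by
  unfold EG
  have h : ∀ ω : Fin k → Fin N, (∏ s, r (ω s)) * (∑ t ∈ F, g t ω)
      = ∑ t ∈ F, (∏ s, r (ω s)) * g t ω := fun ω => Finset.mul_sum _ _ _
  rw [Finset.sum_congr rfl fun ω _ => h ω]
  exact Finset.sum_comm

lemma EG_const (k N : ℕ) (r : Fin N → ℝ) (hr1 : ∑ n, r n = 1) (c : ℝ) :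
    EG k N r (fun _ => c) = c := by
  unfold EG
  rw [← Finset.sum_mul]
  rw [sum_pi_prod (fun _ n => r n)]
  simp [hr1]

lemma EG_congr (k N : ℕ) (r : Fin N → ℝ) (f g : (Fin k → Fin N) → ℝ)
    (h : ∀ ω, f ω = g ω) : EG k N r f = EG k N r g := by
  unfold EG; exact Finset.sum_congr rfl fun ω _ => by rw [h ω]

lemma EG_pos (k N : ℕ) (hN : 0 < N) (r : Fin N → ℝ) (hr : ∀ n, 0 < r n)
    (f : (Fin k → Fin N) → ℝ) (hf : ∀ ω, 0 < f ω) : 0 < EG k N r f := by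
  have : Nonempty (Fin k → Fin N) := ⟨fun _ => ⟨0, hN⟩⟩
  exact Finset.sum_pos
    (fun ω _ => mul_pos (Finset.prod_pos fun s _ => hr _) (hf ω)) Finset.univ_nonempty

lemma EG_factor (k N : ℕ) (r : Fin N → ℝ) (g : Fin k → Fin N → ℝ) :
    EG k N r (fun ω => ∏ s, g s (ω s)) = ∏ s, ∑ n, r n * g s n := by
  unfold EG
  rw [← sum_pi_prod (fun s n => r n * g s n)]
  exact Finset.sum_congr rfl fun ω _ => by rw [← Finset.prod_mul_distrib]

end Generic

lemma fosd {N : ℕ} (hN : 0 < N) (δ p q : Fin N → ℝ) (hδmono : StrictMono δ)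
    (hp1 : ∑ n, p n = 1) (hq1 : ∑ n, q n = 1)
    (hFOSD : ∀ k : ℕ,
      ∑ n ∈ Finset.univ.filter (fun n : Fin N => (n : ℕ) < k), q n ≤
        ∑ n ∈ Finset.univ.filter (fun n : Fin N => (n : ℕ) < k), p n) :
    (∑ n, p n * δ n ≤ ∑ n, q n * δ n) ∧
      (p ≠ q → ∑ n, p n * δ n < ∑ n, q n * δ n) := by
  classical
  set d : Fin N → ℝ := fun n => q n - p n with hd
  have hdsum : ∑ n, d n = 0 := by simp [hd, Finset.sum_sub_distrib, hp1, hq1]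
  set e : ℕ → ℝ := fun k => if h : k < N then δ ⟨k, h⟩ else δ ⟨N - 1, by omega⟩ with he
  have hee : ∀ n : Fin N, e (n : ℕ) = δ n := by
    intro n; simp [he, n.isLt]
  set D : ℕ → ℝ := fun k => ∑ n ∈ Finset.univ.filter (fun n : Fin N => (n : ℕ) < k), d n with hD
  have hDle : ∀ k, D k ≤ 0 := by
    intro k
    have := hFOSD k
    simp only [hD, hd, Finset.sum_sub_distrib]
    linarith
  have htail : ∀ k : ℕ, ∑ n ∈ Finset.univ.filter (fun n : Fin N => k < (n : ℕ)), d n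
      = - D (k + 1) := by
    intro k
    have h := Finset.sum_filter_add_sum_filter_not Finset.univ
      (fun n : Fin N => (n : ℕ) < k + 1) d
    have hf : Finset.univ.filter (fun n : Fin N => k < (n : ℕ)) =
        Finset.univ.filter (fun n : Fin N => ¬ ((n : ℕ) < k + 1)) := by
      apply Finset.filter_congr; intro n _; simp
    rw [hf]
    simp only [hD] at h ⊢
    linarith [hdsum, h]
  have emono : ∀ k, e k ≤ e (k + 1) := by
    intro k
    by_cases h1 : k + 1 < N
    · have h2 : k < N := by omega
      simp only [he]
      rw [dif_pos h2, dif_pos h1]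
      exact le_of_lt (hδmono (by simp [Fin.mk_lt_mk]))
    · by_cases h2 : k < N
      · simp only [he]
        rw [dif_pos h2, dif_neg h1]
        exact le_of_eq (congrArg δ (Fin.ext (by simp; omega)))
      · simp only [he]
        rw [dif_neg h2, dif_neg h1]
  have hrange : ∀ n : Fin N, (Finset.range N).filter (fun k => k < (n : ℕ)) = Finset.range (n : ℕ) := by
    intro n
    ext k
    simp only [Finset.mem_filter, Finset.mem_range]
    constructor
    · rintro ⟨_, h⟩; exact h
    · intro h; exact ⟨lt_trans h n.isLt, h⟩
  have key : ∑ n, d n * δ n = ∑ k ∈ Finset.range N, (e (k+1) - e k) * (- D (k+1)) := by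
    have h1 : ∀ n : Fin N, d n * δ n = d n * e 0 + ∑ k ∈ Finset.range N,
        (if k < (n : ℕ) then d n * (e (k+1) - e k) else 0) := by
      intro n
      have hsub : (∑ k ∈ Finset.range N, if k < (n : ℕ) then d n * (e (k+1) - e k) else 0)
          = ∑ k ∈ Finset.range (n : ℕ), d n * (e (k+1) - e k) := by
        rw [← Finset.sum_filter, hrange n]
      rw [hsub, ← Finset.mul_sum, Finset.sum_range_sub (f := e), hee]
      ring
    rw [Finset.sum_congr rfl (fun n _ => h1 n), Finset.sum_add_distrib]
    have h2 : ∑ n : Fin N, d n * e 0 = 0 := by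
      rw [← Finset.sum_mul, hdsum, zero_mul]
    rw [h2, zero_add, Finset.sum_comm]
    apply Finset.sum_congr rfl
    intro k _
    rw [← Finset.sum_filter]
    have hstep : ∑ a ∈ Finset.univ.filter (fun a : Fin N => k < (a : ℕ)), d a * (e (k+1) - e k)
        = (∑ a ∈ Finset.univ.filter (fun a : Fin N => k < (a : ℕ)), d a) * (e (k+1) - e k) :=
      (Finset.sum_mul _ _ _).symm
    rw [hstep, htail k]
    ring
  have hterm : ∀ k ∈ Finset.range N, 0 ≤ (e (k+1) - e k) * (- D (k+1)) := by
    intro k _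
    apply mul_nonneg
    · linarith [emono k]
    · linarith [hDle (k+1)]
  have hmain : ∑ n, q n * δ n - ∑ n, p n * δ n = ∑ n, d n * δ n := by
    simp [hd, Finset.sum_sub_distrib, sub_mul]
  have hnonneg : 0 ≤ ∑ n, d n * δ n := by
    rw [key]; exact Finset.sum_nonneg hterm
  constructor
  · linarith
  · intro hpq
    have hex : ∃ n : Fin N, d n ≠ 0 := by
      by_contra hcon
      push_neg at hcon
      apply hpq
      funext n
      have := hcon n
      simp only [hd] at this
      linarith [this]
    -- minimal index with d ≠ 0
    obtain ⟨S, hSne⟩ : ∃ S : Finset (Fin N), S.Nonempty ∧ S = Finset.univ.filter (fun n => d n ≠ 0) := by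
      obtain ⟨n, hn⟩ := hex
      exact ⟨_, ⟨n, by simp [hn]⟩, rfl⟩
    obtain ⟨hSne, hSdef⟩ := hSne
    set m : Fin N := S.min' hSne with hm
    have hmS : m ∈ S := S.min'_mem hSne
    have hmd : d m ≠ 0 := by rw [hSdef] at hmS; simpa using hmS
    have hmin : ∀ n : Fin N, (n : ℕ) < (m : ℕ) → d n = 0 := by
      intro n hn
      by_contra hcon
      have h2 : m ≤ n := S.min'_le n (by rw [hSdef]; simp [hcon])
      have h3 : (m : ℕ) ≤ (n : ℕ) := h2
      omega
    have hDm : D ((m : ℕ) + 1) = d m := by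
      simp only [hD]
      apply Finset.sum_eq_single_of_mem m (by simp)
      intro n hn hne
      apply hmin
      have h1 : (n : ℕ) < (m : ℕ) + 1 := by simpa using hn
      have h2 : (n : ℕ) ≠ (m : ℕ) := fun h => hne (Fin.ext h)
      omega
    have hdmneg : d m < 0 := by
      rcases lt_or_eq_of_le (hDm ▸ hDle ((m : ℕ) + 1)) with h | h
      · exact h
      · exact absurd h hmd
    have hDN : D N = 0 := by
      simp only [hD]
      rw [Finset.filter_true_of_mem (fun n _ => n.isLt), hdsum]
    have hmlt : (m : ℕ) + 1 < N := by
      by_contra hcon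
      have h1 : (m : ℕ) + 1 = N := by have := m.isLt; omega
      rw [h1, hDN] at hDm
      exact hmd hDm.symm
    have hpos : 0 < ∑ k ∈ Finset.range N, (e (k+1) - e k) * (- D (k+1)) := by
      apply Finset.sum_pos' hterm
      refine ⟨(m : ℕ), Finset.mem_range.mpr m.isLt, ?_⟩
      apply mul_pos
      · have h1 : e ((m : ℕ) + 1) = δ ⟨(m : ℕ) + 1, hmlt⟩ := by
          simp only [he]; rw [dif_pos hmlt]
        have h2 : e (m : ℕ) = δ m := hee m
        rw [h1, h2]
        have : m < (⟨(m : ℕ) + 1, hmlt⟩ : Fin N) := by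
          simp [Fin.lt_def]
        linarith [hδmono this]
      · rw [hDm]; linarith
    linarith

lemma weight_update {k N : ℕ} (p : Fin N → ℝ) (s0 : Fin k) (ω : Fin k → Fin N) (m : Fin N) :
    (∏ s, p (Function.update ω s0 m s)) * p (ω s0) = (∏ s, p (ω s)) * p m := by
  classical
  have h1 : ∏ s, p (Function.update ω s0 m s)
      = p m * ∏ s ∈ Finset.univ.erase s0, p (ω s) := by
    rw [← Finset.mul_prod_erase Finset.univ (fun s => p (Function.update ω s0 m s))
      (Finset.mem_univ s0)]
    congr 1
    · simp
    · apply Finset.prod_congr rfl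
      intro s hs
      rw [Function.update_of_ne (Finset.ne_of_mem_erase hs)]
  have h2 : ∏ s, p (ω s) = p (ω s0) * ∏ s ∈ Finset.univ.erase s0, p (ω s) :=
    (Finset.mul_prod_erase Finset.univ (fun s => p (ω s)) (Finset.mem_univ s0)).symm
  rw [h1, h2]; ring

lemma sum_indicator_update {k N : ℕ} (p : Fin N → ℝ) (hp1 : ∑ n, p n = 1)
    (s0 : Fin k) (n1 : Fin N) (G : (Fin k → Fin N) → ℝ) :
    ∑ ω : Fin k → Fin N, (∏ s, p (ω s)) * (if ω s0 = n1 then G ω else 0)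
    = p n1 * ∑ ω : Fin k → Fin N, (∏ s, p (ω s)) * G (Function.update ω s0 n1) := by
  classical
  set f : (Fin k → Fin N) × Fin N → ℝ :=
    fun x => p x.2 * ((∏ s, p (x.1 s)) * (if x.1 s0 = n1 then G x.1 else 0)) with hf
  have hΨinv : Function.Involutive
      (fun x : (Fin k → Fin N) × Fin N => (Function.update x.1 s0 x.2, x.1 s0)) := by
    intro x
    ext s
    · simp only
      by_cases h : s = s0
      · subst h; simp
      · simp [Function.update_of_ne h]
    · simp
  have hsum1 : ∑ ω : Fin k → Fin N, (∏ s, p (ω s)) * (if ω s0 = n1 then G ω else 0)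
      = ∑ x : (Fin k → Fin N) × Fin N, f x := by
    rw [Fintype.sum_prod_type]
    apply Finset.sum_congr rfl
    intro ω _
    have : ∑ m : Fin N, f (ω, m)
        = (∑ m : Fin N, p m) * ((∏ s, p (ω s)) * (if ω s0 = n1 then G ω else 0)) := by
      rw [Finset.sum_mul]
    rw [this, hp1, one_mul]
  have hreindex : ∑ x : (Fin k → Fin N) × Fin N, f x
      = ∑ x : (Fin k → Fin N) × Fin N, f (Function.update x.1 s0 x.2, x.1 s0) :=
    (Fintype.sum_bijective _ hΨinv.bijective
      (fun x => f (Function.update x.1 s0 x.2, x.1 s0)) f (fun x => rfl)).symm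
  have hΨval : ∀ (ω : Fin k → Fin N) (m : Fin N), f (Function.update ω s0 m, ω s0)
      = (∏ s, p (ω s)) * (if m = n1 then p n1 * G (Function.update ω s0 m) else 0) := by
    intro ω m
    simp only [hf, Function.update_self]
    by_cases h : m = n1
    · rw [h, if_pos rfl, if_pos rfl]
      have hw := weight_update p s0 ω n1
      linear_combination G (Function.update ω s0 n1) * hw
    · simp [h]
  rw [hsum1, hreindex]
  rw [Fintype.sum_prod_type]
  rw [Finset.mul_sum]
  apply Finset.sum_congr rfl
  intro ω _
  rw [Finset.sum_congr rfl (fun m _ => hΨval ω m)]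
  rw [← Finset.mul_sum]
  simp
  ring

-- ===================== Problem IV side =====================

lemma Epath_eq_EG (T N : ℕ) (r : Fin N → ℝ) (f : (Fin (T-2) → Fin N) → ℝ) :
    Epath T N r f = EG (T-2) N r f := rfl

lemma EpathB_eq_EG (T N : ℕ) (r : Fin N → ℝ) (f : (Fin (T-1) → Fin N) → ℝ) :
    EpathB T N r f = EG (T-1) N r f := rfl

/-- constant shift of a Problem-IV policy -/
def shiftIV (T N : ℕ) (P : PolicyIV T N) (a : ℕ → ℝ) : PolicyIV T N :=
  ⟨fun t ω => P.v t ω + a t, fun t ht ω ω' hs => by rw [P.adapted t ht ω ω' hs]⟩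

lemma discCont_splice (T N : ℕ) (δ : Fin N → ℝ) (t τ : ℕ) (ω ω' : Fin (T-2) → Fin N) :
    discCont T N δ t τ (splice T N t ω ω') = discCont T N δ t τ ω' := by
  unfold discCont splice
  apply Finset.prod_congr rfl
  intro s _
  by_cases h : t + 1 ≤ (s:ℕ) + 2 ∧ (s:ℕ) + 2 < τ
  · rw [if_pos h, if_pos h, if_neg (by omega)]
  · rw [if_neg h, if_neg h]

lemma contA_shift (T N : ℕ) (δ q : Fin N → ℝ) (P : PolicyIV T N) (a : ℕ → ℝ)
    (t : ℕ) (ω : Fin (T-2) → Fin N) :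
    contA T N δ q (fun t ω => P.v t ω + a t) t ω
    = contA T N δ q P.v t ω
      + ∑ τ ∈ Finset.Icc (t+1) T, a τ * Epath T N q (discCont T N δ t τ) := by
  unfold contA
  rw [Epath_eq_EG, Epath_eq_EG]
  have h1 : ∀ ω' : Fin (T-2) → Fin N,
      (∑ τ ∈ Finset.Icc (t+1) T,
        discCont T N δ t τ (splice T N t ω ω') * (P.v τ (splice T N t ω ω') + a τ))
      = (∑ τ ∈ Finset.Icc (t+1) T,
          discCont T N δ t τ (splice T N t ω ω') * P.v τ (splice T N t ω ω'))
        + ∑ τ ∈ Finset.Icc (t+1) T, a τ * discCont T N δ t τ ω' := by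
    intro ω'
    rw [← Finset.sum_add_distrib]
    apply Finset.sum_congr rfl
    intro τ _
    rw [discCont_splice]
    ring
  rw [EG_congr _ _ _ _ _ h1, EG_add]
  congr 1
  rw [EG_finsum]
  apply Finset.sum_congr rfl
  intro τ _
  rw [Epath_eq_EG, EG_cmul]

lemma IC_shift (T N : ℕ) (δ q : Fin N → ℝ) (P : PolicyIV T N) (a : ℕ → ℝ)
    (h : ICIV T N δ q P) : ICIV T N δ q (shiftIV T N P a) := by
  intro t h2 hT ω ω' hpre
  have hIC := h t h2 hT ω ω' hpre
  show (P.v t ω' + a t) + deltaAt T N δ t ω *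
      contA T N δ q (fun t ω => P.v t ω + a t) t ω' ≤ (P.v t ω + a t) + deltaAt T N δ t ω *
      contA T N δ q (fun t ω => P.v t ω + a t) t ω
  rw [contA_shift, contA_shift]
  set C := ∑ τ ∈ Finset.Icc (t+1) T, a τ * Epath T N q (discCont T N δ t τ)
  nlinarith [hIC]

noncomputable def KEdef (T N : ℕ) (p : Fin N → ℝ) (P : PolicyIV T N) (t : ℕ) : ℝ :=
  Epath T N p (fun ω => Real.exp (P.v t ω))

noncomputable def bEdef (T N : ℕ) (δ q : Fin N → ℝ) (δ1 : ℝ) (t : ℕ) : ℝ :=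
  if t = 1 then 1 else δ1 * Epath T N q (discIV T N δ t)

lemma Icc_one_split (T : ℕ) (hT : 1 ≤ T) :
    Finset.Icc 1 T = insert 1 (Finset.Icc 2 T) := by
  ext t; simp [Finset.mem_Icc]; omega

lemma payoff_shift (T N : ℕ) (hT : 3 ≤ T) (δ q : Fin N → ℝ) (hq1 : ∑ n, q n = 1)
    (δ1 : ℝ) (P : PolicyIV T N) (a : ℕ → ℝ) :
    payoffIV T N δ q δ1 (shiftIV T N P a)
    = payoffIV T N δ q δ1 P + ∑ t ∈ Finset.Icc 1 T, a t * bEdef T N δ q δ1 t := by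
  unfold payoffIV
  rw [Epath_eq_EG, Epath_eq_EG]
  have h1 : ∀ ω : Fin (T-2) → Fin N,
      ((shiftIV T N P a).v 1 ω + δ1 * ∑ t ∈ Finset.Icc 2 T,
        discIV T N δ t ω * (shiftIV T N P a).v t ω)
     = (P.v 1 ω + δ1 * ∑ t ∈ Finset.Icc 2 T, discIV T N δ t ω * P.v t ω)
       + (a 1 + δ1 * ∑ t ∈ Finset.Icc 2 T, a t * discIV T N δ t ω) := by
    intro ω
    show (P.v 1 ω + a 1) + δ1 * ∑ t ∈ Finset.Icc 2 T, discIV T N δ t ω * (P.v t ω + a t) = _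
    have : ∑ t ∈ Finset.Icc 2 T, discIV T N δ t ω * (P.v t ω + a t)
        = (∑ t ∈ Finset.Icc 2 T, discIV T N δ t ω * P.v t ω)
          + ∑ t ∈ Finset.Icc 2 T, a t * discIV T N δ t ω := by
      rw [← Finset.sum_add_distrib]
      exact Finset.sum_congr rfl fun t _ => by ring
    rw [this]
    ring
  rw [EG_congr _ _ _ _ _ h1, EG_add]
  congr 1
  have h2 : EG (T-2) N q (fun ω => a 1 + δ1 * ∑ t ∈ Finset.Icc 2 T, a t * discIV T N δ t ω)
      = a 1 + δ1 * ∑ t ∈ Finset.Icc 2 T, a t * EG (T-2) N q (discIV T N δ t) := by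
    rw [EG_add, EG_const _ _ _ hq1, EG_cmul]
    congr 2
    rw [EG_finsum]
    exact Finset.sum_congr rfl fun t _ => EG_cmul _ _ _ _ _
  rw [h2, Icc_one_split T (by omega), Finset.sum_insert (by simp)]
  have hb1 : bEdef T N δ q δ1 1 = 1 := by simp [bEdef]
  rw [hb1, Finset.mul_sum]
  have h3 : ∀ t ∈ Finset.Icc 2 T, δ1 * (a t * EG (T-2) N q (discIV T N δ t))
      = a t * bEdef T N δ q δ1 t := by
    intro t ht
    have : t ≠ 1 := by simp [Finset.mem_Icc] at ht; omega
    simp only [bEdef, if_neg this, Epath_eq_EG]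
    ring
  rw [Finset.sum_congr rfl h3]
  ring

lemma cost_shift (T N : ℕ) (hT : 3 ≤ T) (p : Fin N → ℝ) (R : ℝ) (hR : 1 ≤ R)
    (P : PolicyIV T N) (a : ℕ → ℝ) :
    costIV T N p Real.exp R (shiftIV T N P a)
    = ∑ t ∈ Finset.Icc 1 T, Real.exp (a t) * (KEdef T N p P t / R ^ (t-1)) := by
  unfold costIV
  rw [Epath_eq_EG]
  have h1 : ∀ ω : Fin (T-2) → Fin N,
      (Real.exp ((shiftIV T N P a).v 1 ω) + ∑ t ∈ Finset.Icc 2 T,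
        Real.exp ((shiftIV T N P a).v t ω) / R ^ (t-1))
      = Real.exp (a 1) * Real.exp (P.v 1 ω)
        + ∑ t ∈ Finset.Icc 2 T, Real.exp (a t) * (Real.exp (P.v t ω) / R ^ (t-1)) := by
    intro ω
    show Real.exp (P.v 1 ω + a 1) + ∑ t ∈ Finset.Icc 2 T, Real.exp (P.v t ω + a t) / R ^ (t-1) = _
    rw [Real.exp_add]
    congr 1
    · ring
    · exact Finset.sum_congr rfl fun t _ => by rw [Real.exp_add]; ring
  rw [EG_congr _ _ _ _ _ h1, EG_add]
  rw [Icc_one_split T (by omega), Finset.sum_insert (by simp)]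
  congr 1
  · rw [EG_cmul]
    unfold KEdef
    rw [Epath_eq_EG]
    norm_num
  · rw [EG_finsum]
    apply Finset.sum_congr rfl
    intro t _
    have : (fun ω => Real.exp (a t) * (Real.exp (P.v t ω) / R ^ (t-1)))
        = fun ω => (Real.exp (a t) / R ^ (t-1)) * Real.exp (P.v t ω) := by
      funext ω; ring
    rw [this, EG_cmul]
    unfold KEdef
    rw [Epath_eq_EG]
    ring

lemma Epath_discIV (T N : ℕ) (q δ : Fin N → ℝ) (hq1 : ∑ n, q n = 1) (t : ℕ) :
    Epath T N q (discIV T N δ t)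
    = ∏ s : Fin (T-2), (if (s:ℕ) + 2 < t then (∑ n, q n * δ n) else 1) := by
  rw [Epath_eq_EG]
  unfold discIV
  rw [EG_factor (T-2) N q (fun s n => if (s:ℕ) + 2 < t then δ n else 1)]
  apply Finset.prod_congr rfl
  intro s _
  by_cases h : (s:ℕ) + 2 < t <;> simp [h, hq1]

lemma Efoc (T N : ℕ) (hT : 3 ≤ T) (hN : 0 < N) (R I : ℝ) (hR : 1 ≤ R)
    (δ p q : Fin N → ℝ) (hp : ∀ n, 0 < p n) (hq1 : ∑ n, q n = 1) (δ1 : ℝ)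
    (vE : PolicyIV T N)
    (hEfeas : FeasIVD T N δ p q Real.exp R I Set.univ vE)
    (hEmax : ∀ Q : PolicyIV T N, FeasIVD T N δ p q Real.exp R I Set.univ Q →
      payoffIV T N δ q δ1 Q ≤ payoffIV T N δ q δ1 vE)
    (t0 : ℕ) (ht01 : 1 ≤ t0) (ht0T : t0 ≤ T - 1) :
    bEdef T N δ q δ1 t0 * (KEdef T N p vE (t0+1) / R ^ t0)
    = bEdef T N δ q δ1 (t0+1) * (KEdef T N p vE t0 / R ^ (t0-1)) := by
  have hRpos : (0:ℝ) < R := lt_of_lt_of_le one_pos hR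
  have hKpos : ∀ t : ℕ, 0 < KEdef T N p vE t := by
    intro t
    unfold KEdef
    rw [Epath_eq_EG]
    exact EG_pos _ _ hN p hp _ (fun ω => Real.exp_pos _)
  set κ : ℕ → ℝ := fun t => KEdef T N p vE t / R ^ (t-1) with hκ
  have hκpos : ∀ t, 0 < κ t := fun t => div_pos (hKpos t) (pow_pos hRpos _)
  set r : ℝ := κ t0 / κ (t0+1) with hr
  have hrpos : 0 < r := div_pos (hκpos t0) (hκpos (t0+1))
  have ht0mem : t0 ∈ Finset.Icc 1 T := by simp [Finset.mem_Icc]; omega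
  have ht1mem : t0 + 1 ∈ Finset.Icc 1 T := by simp [Finset.mem_Icc]; omega
  have hne : t0 ≠ t0 + 1 := by omega
  -- cost of vE as a sum
  have hcost0 : costIV T N p Real.exp R vE
      = ∑ t ∈ Finset.Icc 1 T, κ t := by
    have h0 : costIV T N p Real.exp R (shiftIV T N vE (fun _ => 0))
        = costIV T N p Real.exp R vE := by
      unfold costIV shiftIV
      simp
    rw [← h0, cost_shift T N hT p R hR]
    simp
    rfl
  have hev : ∀ᶠ ε in nhds (0:ℝ), 0 < 1 + r * (1 - Real.exp ε) := by
    have hcont : ContinuousAt (fun ε : ℝ => 1 + r * (1 - Real.exp ε)) 0 := by fun_prop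
    have h0 : (0:ℝ) < 1 + r * (1 - Real.exp 0) := by simp
    exact hcont.eventually (eventually_gt_nhds h0)
  have hineq : ∀ᶠ ε in nhds (0:ℝ),
      bEdef T N δ q δ1 t0 * ε
        + bEdef T N δ q δ1 (t0+1) * Real.log (1 + r * (1 - Real.exp ε)) ≤ 0 := by
    filter_upwards [hev] with ε hε
    set η : ℝ := Real.log (1 + r * (1 - Real.exp ε)) with hη
    have hexpη : Real.exp η = 1 + r * (1 - Real.exp ε) := Real.exp_log hε
    set a : ℕ → ℝ := fun t => if t = t0 then ε else if t = t0 + 1 then η else 0 with ha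
    set Q := shiftIV T N vE a with hQ
    -- cost of Q
    have hcostQ : costIV T N p Real.exp R Q = costIV T N p Real.exp R vE := by
      rw [hQ, cost_shift T N hT p R hR, hcost0]
      have hpt : ∀ t ∈ Finset.Icc 1 T, Real.exp (a t) * κ t
          = κ t + (if t = t0 then (Real.exp ε - 1) * κ t0 else 0)
            + (if t = t0 + 1 then (Real.exp η - 1) * κ (t0+1) else 0) := by
        intro t _
        by_cases h1 : t = t0
        · have hat : a t = ε := by simp only [ha]; rw [if_pos h1]
          rw [if_pos h1, if_neg (show ¬ t = t0 + 1 by omega), hat, h1]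
          ring
        · by_cases h2 : t = t0 + 1
          · have hat : a t = η := by simp only [ha]; rw [if_neg h1, if_pos h2]
            rw [if_neg h1, if_pos h2, hat, h2]
            ring
          · have hat : a t = 0 := by simp only [ha]; rw [if_neg h1, if_neg h2]
            rw [if_neg h1, if_neg h2, hat]
            simp
      rw [Finset.sum_congr rfl hpt, Finset.sum_add_distrib, Finset.sum_add_distrib,
        Finset.sum_ite_eq' _ t0 (fun _ => (Real.exp ε - 1) * κ t0),
        Finset.sum_ite_eq' _ (t0+1) (fun _ => (Real.exp η - 1) * κ (t0+1)),
        if_pos ht0mem, if_pos ht1mem, hexpη]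
      have : κ (t0+1) ≠ 0 := ne_of_gt (hκpos (t0+1))
      have hrk : r * κ (t0+1) = κ t0 := by rw [hr]; field_simp
      linear_combination (1 - Real.exp ε) * hrk
    have hfeas : FeasIVD T N δ p q Real.exp R I Set.univ Q := by
      refine ⟨fun t _ ω => trivial, ?_, ?_⟩
      · rw [hcostQ]; exact hEfeas.2.1
      · exact IC_shift T N δ q vE a hEfeas.2.2
    have hle := hEmax Q hfeas
    rw [hQ, payoff_shift T N hT δ q hq1 δ1 vE a] at hle
    have hsum : ∑ t ∈ Finset.Icc 1 T, a t * bEdef T N δ q δ1 t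
        = ε * bEdef T N δ q δ1 t0 + η * bEdef T N δ q δ1 (t0+1) := by
      have hpt : ∀ t ∈ Finset.Icc 1 T, a t * bEdef T N δ q δ1 t
          = (if t = t0 then ε * bEdef T N δ q δ1 t0 else 0)
            + (if t = t0 + 1 then η * bEdef T N δ q δ1 (t0+1) else 0) := by
        intro t _
        by_cases h1 : t = t0
        · have hat : a t = ε := by simp only [ha]; rw [if_pos h1]
          rw [if_pos h1, if_neg (show ¬ t = t0 + 1 by omega), hat, h1]; ring
        · by_cases h2 : t = t0 + 1
          · have hat : a t = η := by simp only [ha]; rw [if_neg h1, if_pos h2]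
            rw [if_neg h1, if_pos h2, hat, h2]; ring
          · have hat : a t = 0 := by simp only [ha]; rw [if_neg h1, if_neg h2]
            rw [if_neg h1, if_neg h2, hat]; simp
      rw [Finset.sum_congr rfl hpt, Finset.sum_add_distrib,
        Finset.sum_ite_eq' _ t0 (fun _ => ε * bEdef T N δ q δ1 t0),
        Finset.sum_ite_eq' _ (t0+1) (fun _ => η * bEdef T N δ q δ1 (t0+1)),
        if_pos ht0mem, if_pos ht1mem]
    rw [hsum] at hle
    nlinarith [hle]
  have hfoc := foc_core _ _ _ hineq
  have hκ2 : κ (t0+1) ≠ 0 := ne_of_gt (hκpos (t0+1))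
  have : bEdef T N δ q δ1 t0 * κ (t0+1) = bEdef T N δ q δ1 (t0+1) * κ t0 := by
    rw [hfoc, hr]
    field_simp
  have hsimp : κ (t0+1) = KEdef T N p vE (t0+1) / R ^ t0 := by
    rw [hκ]; norm_num
  rw [← hsimp, this, hκ]

-- ===================== efficient-problem side =====================

noncomputable def KBdef (T N : ℕ) (p : Fin N → ℝ) (P : PolicyB T N) (t : ℕ) : ℝ :=
  EpathB T N p (fun ω => Real.exp (P.v t ω))

noncomputable def LBdef (T N : ℕ) (p : Fin N → ℝ) (P : PolicyB T N)
    (s0 : Fin (T-1)) (n1 : Fin N) (t : ℕ) : ℝ :=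
  EpathB T N p (fun ω => if ω s0 = n1 then Real.exp (P.v t ω) else 0)

noncomputable def bBdef (T N : ℕ) (δ p : Fin N → ℝ) (s0 : Fin (T-1)) (n1 : Fin N) (t : ℕ) : ℝ :=
  EpathB T N p (fun ω => discBpol T N δ t ω * (if ω s0 = n1 then 1 else 0))

/-- shift of an efficient-problem policy on the fiber `ω s0 = n1` -/
def shiftB (T N : ℕ) (P : PolicyB T N) (s0 : Fin (T-1)) (hs0 : (s0:ℕ) = 0) (n1 : Fin N)
    (c : ℕ → ℝ) : PolicyB T N :=
  ⟨fun t ω => P.v t ω + (if t ≠ 0 ∧ ω s0 = n1 then c t else 0), by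
    intro t ht ω ω' h
    rw [P.adapted t ht ω ω' h]
    by_cases h0 : t = 0
    · subst h0; simp
    · have hss : ω s0 = ω' s0 := h s0 (by omega)
      rw [hss]⟩

lemma objB_shift (T N : ℕ) (δ p : Fin N → ℝ) (P : PolicyB T N)
    (s0 : Fin (T-1)) (hs0 : (s0:ℕ) = 0) (n1 : Fin N) (c : ℕ → ℝ) :
    objBpol T N δ p (shiftB T N P s0 hs0 n1 c)
    = objBpol T N δ p P + ∑ t ∈ Finset.Icc 1 T, c t * bBdef T N δ p s0 n1 t := by
  unfold objBpol
  rw [EpathB_eq_EG, EpathB_eq_EG]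
  have h1 : ∀ ω : Fin (T-1) → Fin N,
      (∑ t ∈ Finset.Icc 1 T, discBpol T N δ t ω * (shiftB T N P s0 hs0 n1 c).v t ω)
      = (∑ t ∈ Finset.Icc 1 T, discBpol T N δ t ω * P.v t ω)
        + ∑ t ∈ Finset.Icc 1 T,
            c t * (discBpol T N δ t ω * (if ω s0 = n1 then 1 else 0)) := by
    intro ω
    rw [← Finset.sum_add_distrib]
    apply Finset.sum_congr rfl
    intro t ht
    have ht0 : t ≠ 0 := by simp [Finset.mem_Icc] at ht; omega
    show discBpol T N δ t ω * (P.v t ω + (if t ≠ 0 ∧ ω s0 = n1 then c t else 0)) = _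
    by_cases hχ : ω s0 = n1
    · rw [if_pos ⟨ht0, hχ⟩, if_pos hχ]; ring
    · rw [if_neg (fun hc => hχ hc.2), if_neg hχ]; ring
  rw [EG_congr _ _ _ _ _ h1, EG_add,
    EG_finsum _ _ _ _ (fun t ω => c t * (discBpol T N δ t ω * (if ω s0 = n1 then 1 else 0)))]
  congr 1
  apply Finset.sum_congr rfl
  intro t _
  rw [EG_cmul]
  rfl

lemma costB_shift (T N : ℕ) (p : Fin N → ℝ) (R : ℝ) (P : PolicyB T N)
    (s0 : Fin (T-1)) (hs0 : (s0:ℕ) = 0) (n1 : Fin N) (c : ℕ → ℝ) :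
    costBpol T N p Real.exp R (shiftB T N P s0 hs0 n1 c)
    = ∑ t ∈ Finset.Icc 1 T,
        (KBdef T N p P t + (Real.exp (c t) - 1) * LBdef T N p P s0 n1 t) / R ^ (t-1) := by
  unfold costBpol
  rw [EpathB_eq_EG]
  have h1 : ∀ ω : Fin (T-1) → Fin N,
      (∑ t ∈ Finset.Icc 1 T, Real.exp ((shiftB T N P s0 hs0 n1 c).v t ω) / R ^ (t-1))
      = ∑ t ∈ Finset.Icc 1 T, (R ^ (t-1))⁻¹ *
          (Real.exp (P.v t ω) + (Real.exp (c t) - 1) *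
            (if ω s0 = n1 then Real.exp (P.v t ω) else 0)) := by
    intro ω
    apply Finset.sum_congr rfl
    intro t ht
    have ht0 : t ≠ 0 := by simp [Finset.mem_Icc] at ht; omega
    show Real.exp (P.v t ω + (if t ≠ 0 ∧ ω s0 = n1 then c t else 0)) / R ^ (t-1) = _
    by_cases hχ : ω s0 = n1
    · rw [if_pos ⟨ht0, hχ⟩, if_pos hχ, Real.exp_add, div_eq_mul_inv]
      ring
    · rw [if_neg (fun hc => hχ hc.2), if_neg hχ, div_eq_mul_inv]
      ring
  rw [EG_congr _ _ _ _ _ h1,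
    EG_finsum _ _ _ _ (fun t ω => (R ^ (t-1))⁻¹ *
      (Real.exp (P.v t ω) + (Real.exp (c t) - 1) *
        (if ω s0 = n1 then Real.exp (P.v t ω) else 0)))]
  apply Finset.sum_congr rfl
  intro t _
  rw [EG_cmul, EG_add, EG_cmul]
  rw [div_eq_mul_inv]
  unfold KBdef LBdef
  rw [EpathB_eq_EG, EpathB_eq_EG]
  ring

lemma Bfoc (T N : ℕ) (hT : 3 ≤ T) (hN : 0 < N) (R I : ℝ) (hR : 1 ≤ R)
    (δ p : Fin N → ℝ) (hp : ∀ n, 0 < p n)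
    (s0 : Fin (T-1)) (hs0 : (s0:ℕ) = 0) (n1 : Fin N)
    (vB : PolicyB T N)
    (hBfeas : FeasBD T N p Real.exp R I Set.univ vB)
    (hBmax : ∀ Q : PolicyB T N, FeasBD T N p Real.exp R I Set.univ Q →
      objBpol T N δ p Q ≤ objBpol T N δ p vB)
    (t0 : ℕ) (ht01 : 1 ≤ t0) (ht0T : t0 ≤ T - 1) :
    bBdef T N δ p s0 n1 t0 * (LBdef T N p vB s0 n1 (t0+1) / R ^ t0)
    = bBdef T N δ p s0 n1 (t0+1) * (LBdef T N p vB s0 n1 t0 / R ^ (t0-1)) := by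
  have hRpos : (0:ℝ) < R := lt_of_lt_of_le one_pos hR
  have hLpos : ∀ t : ℕ, 0 < LBdef T N p vB s0 n1 t := by
    intro t
    unfold LBdef EpathB
    dsimp only
    apply Finset.sum_pos'
    · intro ω _
      apply mul_nonneg (Finset.prod_nonneg fun s _ => le_of_lt (hp _))
      by_cases h : ω s0 = n1
      · rw [if_pos h]; exact le_of_lt (Real.exp_pos _)
      · rw [if_neg h]
    · refine ⟨fun _ => n1, Finset.mem_univ _, ?_⟩
      rw [if_pos rfl]
      exact mul_pos (Finset.prod_pos fun s _ => hp _) (Real.exp_pos _)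
  set lf : ℕ → ℝ := fun t => LBdef T N p vB s0 n1 t / R ^ (t-1) with hlf
  have hlfpos : ∀ t, 0 < lf t := fun t => div_pos (hLpos t) (pow_pos hRpos _)
  set r : ℝ := lf t0 / lf (t0+1) with hr
  have hrpos : 0 < r := div_pos (hlfpos t0) (hlfpos (t0+1))
  have ht0mem : t0 ∈ Finset.Icc 1 T := by simp [Finset.mem_Icc]; omega
  have ht1mem : t0 + 1 ∈ Finset.Icc 1 T := by simp [Finset.mem_Icc]; omega
  have hne : t0 ≠ t0 + 1 := by omega
  have hcost0 : costBpol T N p Real.exp R vB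
      = ∑ t ∈ Finset.Icc 1 T, KBdef T N p vB t / R ^ (t-1) := by
    have h0 : costBpol T N p Real.exp R (shiftB T N vB s0 hs0 n1 (fun _ => 0))
        = costBpol T N p Real.exp R vB := by
      unfold costBpol shiftB
      simp
    rw [← h0, costB_shift T N p R vB s0 hs0 n1]
    simp
  have hev : ∀ᶠ ε in nhds (0:ℝ), 0 < 1 + r * (1 - Real.exp ε) := by
    have hcont : ContinuousAt (fun ε : ℝ => 1 + r * (1 - Real.exp ε)) 0 := by fun_prop
    have h0 : (0:ℝ) < 1 + r * (1 - Real.exp 0) := by simp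
    exact hcont.eventually (eventually_gt_nhds h0)
  have hineq : ∀ᶠ ε in nhds (0:ℝ),
      bBdef T N δ p s0 n1 t0 * ε
        + bBdef T N δ p s0 n1 (t0+1) * Real.log (1 + r * (1 - Real.exp ε)) ≤ 0 := by
    filter_upwards [hev] with ε hε
    set η : ℝ := Real.log (1 + r * (1 - Real.exp ε)) with hη
    have hexpη : Real.exp η = 1 + r * (1 - Real.exp ε) := Real.exp_log hε
    set c : ℕ → ℝ := fun t => if t = t0 then ε else if t = t0 + 1 then η else 0 with hc
    set Q := shiftB T N vB s0 hs0 n1 c with hQ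
    have hcostQ : costBpol T N p Real.exp R Q = costBpol T N p Real.exp R vB := by
      rw [hQ, costB_shift T N p R vB s0 hs0 n1, hcost0]
      have hpt : ∀ t ∈ Finset.Icc 1 T,
          (KBdef T N p vB t + (Real.exp (c t) - 1) * LBdef T N p vB s0 n1 t) / R ^ (t-1)
          = KBdef T N p vB t / R ^ (t-1)
            + (if t = t0 then (Real.exp ε - 1) * lf t0 else 0)
            + (if t = t0 + 1 then (Real.exp η - 1) * lf (t0+1) else 0) := by
        intro t _
        by_cases h1 : t = t0
        · have hct : c t = ε := by simp only [hc]; rw [if_pos h1]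
          rw [if_pos h1, if_neg (show ¬ t = t0 + 1 by omega), hct, h1]
          rw [hlf]
          field_simp
          ring
        · by_cases h2 : t = t0 + 1
          · have hct : c t = η := by simp only [hc]; rw [if_neg h1, if_pos h2]
            rw [if_neg h1, if_pos h2, hct, h2]
            rw [hlf]
            field_simp
            ring
          · have hct : c t = 0 := by simp only [hc]; rw [if_neg h1, if_neg h2]
            rw [if_neg h1, if_neg h2, hct]
            simp
      rw [Finset.sum_congr rfl hpt, Finset.sum_add_distrib, Finset.sum_add_distrib,
        Finset.sum_ite_eq' _ t0 (fun _ => (Real.exp ε - 1) * lf t0),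
        Finset.sum_ite_eq' _ (t0+1) (fun _ => (Real.exp η - 1) * lf (t0+1)),
        if_pos ht0mem, if_pos ht1mem, hexpη]
      have hlf2 : lf (t0+1) ≠ 0 := ne_of_gt (hlfpos (t0+1))
      have hrk : r * lf (t0+1) = lf t0 := by rw [hr]; field_simp
      linear_combination (1 - Real.exp ε) * hrk
    have hfeas : FeasBD T N p Real.exp R I Set.univ Q := by
      refine ⟨fun t _ ω => trivial, ?_⟩
      rw [hcostQ]; exact hBfeas.2
    have hle := hBmax Q hfeas
    rw [hQ, objB_shift T N δ p vB s0 hs0 n1 c] at hle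
    have hsum : ∑ t ∈ Finset.Icc 1 T, c t * bBdef T N δ p s0 n1 t
        = ε * bBdef T N δ p s0 n1 t0 + η * bBdef T N δ p s0 n1 (t0+1) := by
      have hpt : ∀ t ∈ Finset.Icc 1 T, c t * bBdef T N δ p s0 n1 t
          = (if t = t0 then ε * bBdef T N δ p s0 n1 t0 else 0)
            + (if t = t0 + 1 then η * bBdef T N δ p s0 n1 (t0+1) else 0) := by
        intro t _
        by_cases h1 : t = t0
        · have hct : c t = ε := by simp only [hc]; rw [if_pos h1]
          rw [if_pos h1, if_neg (show ¬ t = t0 + 1 by omega), hct, h1]; ring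
        · by_cases h2 : t = t0 + 1
          · have hct : c t = η := by simp only [hc]; rw [if_neg h1, if_pos h2]
            rw [if_neg h1, if_pos h2, hct, h2]; ring
          · have hct : c t = 0 := by simp only [hc]; rw [if_neg h1, if_neg h2]
            rw [if_neg h1, if_neg h2, hct]; simp
      rw [Finset.sum_congr rfl hpt, Finset.sum_add_distrib,
        Finset.sum_ite_eq' _ t0 (fun _ => ε * bBdef T N δ p s0 n1 t0),
        Finset.sum_ite_eq' _ (t0+1) (fun _ => η * bBdef T N δ p s0 n1 (t0+1)),
        if_pos ht0mem, if_pos ht1mem]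
    rw [hsum] at hle
    nlinarith [hle]
  have hfoc := foc_core _ _ _ hineq
  have hlf2 : lf (t0+1) ≠ 0 := ne_of_gt (hlfpos (t0+1))
  have hkey : bBdef T N δ p s0 n1 t0 * lf (t0+1) = bBdef T N δ p s0 n1 (t0+1) * lf t0 := by
    rw [hfoc, hr]
    field_simp
  have hsimp : lf (t0+1) = LBdef T N p vB s0 n1 (t0+1) / R ^ t0 := by
    rw [hlf]; norm_num
  rw [← hsimp, hkey, hlf]

-- ===================== coefficient evaluations =====================

lemma bE_two (T N : ℕ) (δ q : Fin N → ℝ) (hq1 : ∑ n, q n = 1) (δ1 : ℝ) :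
    bEdef T N δ q δ1 2 = δ1 := by
  unfold bEdef
  rw [if_neg (by omega), Epath_discIV T N q δ hq1]
  have : ∀ s : Fin (T-2), (if (s:ℕ) + 2 < 2 then (∑ n, q n * δ n) else 1) = 1 := by
    intro s; rw [if_neg (by omega)]
  rw [Finset.prod_congr rfl fun s _ => this s]
  simp

lemma bE_succ (T N : ℕ) (hT : 3 ≤ T) (δ q : Fin N → ℝ) (hq1 : ∑ n, q n = 1) (δ1 : ℝ)
    (t : ℕ) (h2 : 2 ≤ t) (hle : t ≤ T - 1) :
    bEdef T N δ q δ1 (t+1) = (∑ n, q n * δ n) * bEdef T N δ q δ1 t := by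
  unfold bEdef
  rw [if_neg (by omega), if_neg (by omega), Epath_discIV T N q δ hq1,
    Epath_discIV T N q δ hq1]
  have hs : t - 2 < T - 2 := by omega
  have hkey : (∏ s : Fin (T-2), if (s:ℕ) + 2 < t + 1 then (∑ n, q n * δ n) else 1)
      = (∑ n, q n * δ n) * ∏ s : Fin (T-2), if (s:ℕ) + 2 < t then (∑ n, q n * δ n) else 1 := by
    apply prod_factor_at _ _ ⟨t-2, hs⟩
    · intro s hne
      have hv : (s:ℕ) ≠ t - 2 := fun hc => hne (Fin.ext hc)
      by_cases hcond : (s:ℕ) + 2 < t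
      · rw [if_pos hcond, if_pos (by omega)]
      · rw [if_neg hcond, if_neg (by omega)]
    · have hval : ((⟨t-2, hs⟩ : Fin (T-2)) : ℕ) = t - 2 := rfl
      rw [hval, if_pos (by omega), if_neg (by omega)]
      ring
  rw [hkey]
  ring

lemma bB_factor (T N : ℕ) (δ p : Fin N → ℝ) (s0 : Fin (T-1)) (n1 : Fin N) (t : ℕ) :
    bBdef T N δ p s0 n1 t
    = ∏ s : Fin (T-1), ∑ m, p m * ((if (s:ℕ) + 1 < t then δ m else 1) *
        (if s = s0 then (if m = n1 then (1:ℝ) else 0) else 1)) := by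
  unfold bBdef EpathB discBpol
  dsimp only
  rw [← sum_pi_prod (fun s m => p m * ((if (s:ℕ) + 1 < t then δ m else 1) *
      (if s = s0 then (if m = n1 then (1:ℝ) else 0) else 1)))]
  apply Finset.sum_congr rfl
  intro ω _
  have hind : (if ω s0 = n1 then (1:ℝ) else 0)
      = ∏ s : Fin (T-1), (if s = s0 then (if ω s = n1 then (1:ℝ) else 0) else 1) := by
    rw [Finset.prod_ite_eq' Finset.univ s0 (fun s => if ω s = n1 then (1:ℝ) else 0)]
    simp
  rw [hind]
  have hdist : ∏ s : Fin (T-1), p (ω s) * ((if (s:ℕ) + 1 < t then δ (ω s) else 1) *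
      (if s = s0 then (if ω s = n1 then (1:ℝ) else 0) else 1))
      = (∏ s : Fin (T-1), p (ω s)) * ((∏ s : Fin (T-1), if (s:ℕ) + 1 < t then δ (ω s) else 1) *
        (∏ s : Fin (T-1), if s = s0 then (if ω s = n1 then (1:ℝ) else 0) else 1)) := by
    rw [Finset.prod_mul_distrib, Finset.prod_mul_distrib]
  rw [hdist]

lemma sum_ite_pick {N : ℕ} (f : Fin N → ℝ) (n1 : Fin N) :
    ∑ m, (if m = n1 then f m else 0) = f n1 := by
  rw [Finset.sum_ite_eq' Finset.univ n1 f]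
  simp

lemma bB_one (T N : ℕ) (δ p : Fin N → ℝ) (hp1 : ∑ n, p n = 1)
    (s0 : Fin (T-1)) (n1 : Fin N) :
    bBdef T N δ p s0 n1 1 = p n1 := by
  rw [bB_factor]
  have hkey : (∏ s : Fin (T-1), ∑ m, p m * ((if (s:ℕ) + 1 < 1 then δ m else 1) *
      (if s = s0 then (if m = n1 then (1:ℝ) else 0) else 1)))
      = p n1 * ∏ _s : Fin (T-1), (1:ℝ) := by
    apply prod_factor_at _ _ s0
    · intro s hne
      rw [Finset.sum_congr rfl (fun m _ => by
        rw [if_neg (show ¬ (s:ℕ) + 1 < 1 by omega), if_neg hne, one_mul, mul_one])]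
      exact hp1
    · have h1 : (∑ m, p m * ((if (s0:ℕ) + 1 < 1 then δ m else 1) *
          (if s0 = s0 then (if m = n1 then (1:ℝ) else 0) else 1)))
          = ∑ m, (if m = n1 then p m else 0) := by
        apply Finset.sum_congr rfl
        intro m _
        rw [if_neg (show ¬ (s0:ℕ) + 1 < 1 by omega), if_pos rfl, one_mul]
        by_cases hm : m = n1
        · rw [if_pos hm, if_pos hm, mul_one]
        · rw [if_neg hm, if_neg hm, mul_zero]
      rw [h1, sum_ite_pick p n1, mul_one]
  rw [hkey, Finset.prod_const_one, mul_one]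

lemma bB_two (T N : ℕ) (hT : 3 ≤ T) (δ p : Fin N → ℝ) (hp1 : ∑ n, p n = 1)
    (s0 : Fin (T-1)) (hs0 : (s0:ℕ) = 0) (n1 : Fin N) :
    bBdef T N δ p s0 n1 2 = δ n1 * bBdef T N δ p s0 n1 1 := by
  rw [bB_factor, bB_factor]
  apply prod_factor_at _ _ s0
  · intro s hne
    apply Finset.sum_congr rfl
    intro m _
    have hv : (s:ℕ) ≠ 0 := fun hc => hne (Fin.ext (by rw [hc, hs0]))
    rw [if_neg (show ¬ (s:ℕ) + 1 < 2 by omega), if_neg (show ¬ (s:ℕ) + 1 < 1 by omega)]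
  · have h1 : (∑ m, p m * ((if (s0:ℕ) + 1 < 2 then δ m else 1) *
        (if s0 = s0 then (if m = n1 then (1:ℝ) else 0) else 1)))
        = ∑ m, (if m = n1 then p m * δ m else 0) := by
      apply Finset.sum_congr rfl
      intro m _
      rw [if_pos (show (s0:ℕ) + 1 < 2 by omega), if_pos rfl]
      by_cases hm : m = n1
      · rw [if_pos hm, if_pos hm, mul_one]
      · rw [if_neg hm, if_neg hm, mul_zero, mul_zero]
    have h2 : (∑ m, p m * ((if (s0:ℕ) + 1 < 1 then δ m else 1) *
        (if s0 = s0 then (if m = n1 then (1:ℝ) else 0) else 1)))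
        = ∑ m, (if m = n1 then p m else 0) := by
      apply Finset.sum_congr rfl
      intro m _
      rw [if_neg (show ¬ (s0:ℕ) + 1 < 1 by omega), if_pos rfl, one_mul]
      by_cases hm : m = n1
      · rw [if_pos hm, if_pos hm, mul_one]
      · rw [if_neg hm, if_neg hm, mul_zero]
    rw [h1, h2, sum_ite_pick (fun m => p m * δ m) n1, sum_ite_pick p n1]
    ring

lemma bB_succ (T N : ℕ) (hT : 3 ≤ T) (δ p : Fin N → ℝ) (hp1 : ∑ n, p n = 1)
    (s0 : Fin (T-1)) (hs0 : (s0:ℕ) = 0) (n1 : Fin N)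
    (t : ℕ) (h2 : 2 ≤ t) (hle : t ≤ T - 1) :
    bBdef T N δ p s0 n1 (t+1) = (∑ m, p m * δ m) * bBdef T N δ p s0 n1 t := by
  rw [bB_factor, bB_factor]
  have hs : t - 1 < T - 1 := by omega
  apply prod_factor_at _ _ ⟨t-1, hs⟩
  · intro s hne
    apply Finset.sum_congr rfl
    intro m _
    have hv : (s:ℕ) ≠ t - 1 := fun hc => hne (Fin.ext hc)
    by_cases hcond : (s:ℕ) + 1 < t
    · rw [if_pos hcond, if_pos (by omega)]
    · rw [if_neg hcond, if_neg (by omega)]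
  · have hval : ((⟨t-1, hs⟩ : Fin (T-1)) : ℕ) = t - 1 := rfl
    have hnes0 : (⟨t-1, hs⟩ : Fin (T-1)) ≠ s0 := by
      intro hc
      have : t - 1 = 0 := by rw [← hs0, ← hc]
      omega
    have h1 : (∑ m, p m * ((if ((⟨t-1, hs⟩ : Fin (T-1)):ℕ) + 1 < t + 1 then δ m else 1) *
        (if (⟨t-1, hs⟩ : Fin (T-1)) = s0 then (if m = n1 then (1:ℝ) else 0) else 1)))
        = ∑ m, p m * δ m := by
      apply Finset.sum_congr rfl
      intro m _
      rw [hval, if_pos (by omega), if_neg hnes0, mul_one]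
    have h3 : (∑ m, p m * ((if ((⟨t-1, hs⟩ : Fin (T-1)):ℕ) + 1 < t then δ m else 1) *
        (if (⟨t-1, hs⟩ : Fin (T-1)) = s0 then (if m = n1 then (1:ℝ) else 0) else 1)))
        = ∑ m, p m := by
      apply Finset.sum_congr rfl
      intro m _
      rw [hval, if_neg (by omega), if_neg hnes0, mul_one, mul_one]
    rw [h1, h3, hp1, mul_one]

lemma LB_eq_cB (T N : ℕ) (p : Fin N → ℝ) (hp1 : ∑ n, p n = 1) (P : PolicyB T N)
    (s0 : Fin (T-1)) (hs0 : (s0:ℕ) = 0) (n1 : Fin N) (t : ℕ) :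
    LBdef T N p P s0 n1 t
    = p n1 * EpathB T N p (fun ω =>
        Real.exp (P.v t (fun s => if (s:ℕ) = 0 then n1 else ω s))) := by
  unfold LBdef EpathB
  dsimp only
  have hupd : ∀ ω : Fin (T-1) → Fin N,
      (fun s : Fin (T-1) => if (s:ℕ) = 0 then n1 else ω s) = Function.update ω s0 n1 := by
    intro ω; funext s
    by_cases h : s = s0
    · subst h; rw [if_pos hs0, Function.update_self]
    · have hv : (s:ℕ) ≠ 0 := fun hc => h (Fin.ext (by rw [hc, hs0]))
      rw [if_neg hv, Function.update_of_ne h]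
  rw [sum_indicator_update p hp1 s0 n1 (fun ω => Real.exp (P.v t ω))]
  congr 1
  apply Finset.sum_congr rfl
  intro ω _
  rw [hupd ω]

lemma ratio_chain (R : ℝ) (hR : 0 < R) (b c : ℕ → ℝ) (X : ℝ)
    (t0 : ℕ) (ht1 : 1 ≤ t0)
    (hfoc : b t0 * (c (t0+1) / R ^ t0) = b (t0+1) * (c t0 / R ^ (t0-1)))
    (hb : 0 < b t0) (hsucc : b (t0+1) = X * b t0) :
    c (t0+1) = R * X * c t0 := by
  have hpow : R ^ t0 = R * R ^ (t0-1) := by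
    have h : t0 - 1 + 1 = t0 := by omega
    conv_lhs => rw [← h]
    rw [pow_succ]
    ring
  have hRne : R ≠ 0 := ne_of_gt hR
  have hRpne : R ^ (t0-1) ≠ 0 := pow_ne_zero _ hRne
  have hbne : b t0 ≠ 0 := ne_of_gt hb
  rw [hsucc] at hfoc
  have h1 : c (t0+1) / R ^ t0 = X * (c t0 / R ^ (t0-1)) := by
    apply mul_left_cancel₀ hbne
    rw [hfoc]; ring
  have h2 : c (t0+1) = X * (c t0 / R ^ (t0-1)) * R ^ t0 := by
    rw [← h1]
    field_simp [hpow]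
  rw [h2, hpow]
  field_simp

-- ===================== main theorem =====================

/-- Corollary (logarithmic utility: equilibrium consumption grows
faster).  With `u c = ln c`, i.e. `φ = Real.exp` on `D = ℝ`, let `vE` be a maximizer
of Problem IV (for fixed initial type `δ^(n1)`) and `vB` a maximizer of the efficient
problem, with equilibrium consumption `cE t = E_F[exp (v^E_t)]` and efficient
consumption `cB t = E_F[exp (v^B_t(δ₁,·))]` (first draw fixed at the initial type).
Then for every `t ∈ {1,…,T-1}` the equilibrium growth ratio `cE (t+1) / cE t` is at
least the efficient growth ratio `cB (t+1) / cB t`; the ratios are equal for all `t`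
if `p = q`; and for `t ≥ 2` the inequality is strict if `p ≠ q`. -/
theorem stmt14
    (T N : ℕ) (hT : 3 ≤ T) (hN : 2 ≤ N)
    (R I : ℝ) (hR : 1 ≤ R) (hI : 0 < I)
    (δ : Fin N → ℝ) (hδpos : ∀ n, 0 < δ n) (hδmono : StrictMono δ)
    (p q : Fin N → ℝ) (hp : ∀ n, 0 < p n) (hq : ∀ n, 0 < q n)
    (hp1 : ∑ n, p n = 1) (hq1 : ∑ n, q n = 1)
    (hFOSD : ∀ k : ℕ,
      ∑ n ∈ Finset.univ.filter (fun n : Fin N => (n : ℕ) < k), q n ≤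
        ∑ n ∈ Finset.univ.filter (fun n : Fin N => (n : ℕ) < k), p n)
    (n1 : Fin N)
    -- vE is a maximizer of Problem IV for initial type δ n1, with φ = exp
    (vE : PolicyIV T N)
    (hEfeas : FeasIVD T N δ p q Real.exp R I Set.univ vE)
    (hEmax : ∀ Q : PolicyIV T N, FeasIVD T N δ p q Real.exp R I Set.univ Q →
      payoffIV T N δ q (δ n1) Q ≤ payoffIV T N δ q (δ n1) vE)
    -- vB is a maximizer of the efficient problem, with φ = exp
    (vB : PolicyB T N)
    (hBfeas : FeasBD T N p Real.exp R I Set.univ vB)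
    (hBmax : ∀ Q : PolicyB T N, FeasBD T N p Real.exp R I Set.univ Q →
      objBpol T N δ p Q ≤ objBpol T N δ p vB)
    -- equilibrium and efficient expected consumption
    (cE cB : ℕ → ℝ)
    (hcE : ∀ t, cE t = Epath T N p (fun ω => Real.exp (vE.v t ω)))
    (hcB : ∀ t, cB t = EpathB T N p (fun ω =>
      Real.exp (vB.v t (fun s => if (s : ℕ) = 0 then n1 else ω s)))) :
    -- equilibrium consumption grows weakly faster
    (∀ t ∈ Finset.Icc 1 (T - 1), cB (t + 1) / cB t ≤ cE (t + 1) / cE t) ∧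
    -- with equality if beliefs agree
    (p = q → ∀ t ∈ Finset.Icc 1 (T - 1), cE (t + 1) / cE t = cB (t + 1) / cB t) ∧
    -- and strictly for t ≥ 2 if the agent is strictly more optimistic
    (p ≠ q → ∀ t ∈ Finset.Icc 2 (T - 1), cB (t + 1) / cB t < cE (t + 1) / cE t) := by
  classical
  have hN0 : 0 < N := by omega
  have hRpos : (0:ℝ) < R := lt_of_lt_of_le one_pos hR
  set Qb : ℝ := ∑ n, q n * δ n with hQb
  set Pb : ℝ := ∑ n, p n * δ n with hPb
  have hfosd := fosd hN0 δ p q hδmono hp1 hq1 hFOSD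
  have hQbpos : 0 < Qb :=
    Finset.sum_pos (fun n _ => mul_pos (hq n) (hδpos n)) ⟨n1, Finset.mem_univ n1⟩
  have hPbpos : 0 < Pb :=
    Finset.sum_pos (fun n _ => mul_pos (hp n) (hδpos n)) ⟨n1, Finset.mem_univ n1⟩
  -- positivity of consumptions
  have hcEpos : ∀ t, 0 < cE t := by
    intro t
    rw [hcE t, Epath_eq_EG]
    exact EG_pos _ _ hN0 p hp _ (fun ω => Real.exp_pos _)
  have hcBpos : ∀ t, 0 < cB t := by
    intro t
    rw [hcB t, EpathB_eq_EG]
    exact EG_pos _ _ hN0 p hp _ (fun ω => Real.exp_pos _)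
  -- positivity of payoff coefficients
  have hbEpos : ∀ t, 0 < bEdef T N δ q (δ n1) t := by
    intro t
    unfold bEdef
    by_cases h : t = 1
    · rw [if_pos h]; norm_num
    · rw [if_neg h, Epath_discIV T N q δ hq1]
      apply mul_pos (hδpos n1)
      apply Finset.prod_pos
      intro s _
      by_cases hc : (s:ℕ) + 2 < t
      · rw [if_pos hc]; exact hQbpos
      · rw [if_neg hc]; norm_num
  -- equilibrium consumption growth
  have hEchain : ∀ t, 1 ≤ t → t ≤ T - 1 →
      cE (t+1) = R * (if t = 1 then δ n1 else Qb) * cE t := by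
    intro t ht1 htT
    have hfoc := Efoc T N hT hN0 R I hR δ p q hp hq1 (δ n1) vE hEfeas hEmax t ht1 htT
    have hKE : ∀ u, KEdef T N p vE u = cE u := fun u => (hcE u).symm
    rw [hKE, hKE] at hfoc
    apply ratio_chain R hRpos _ cE _ t ht1 hfoc (hbEpos t)
    by_cases h : t = 1
    · rw [h, if_pos rfl, bE_two T N δ q hq1 (δ n1)]
      simp [bEdef]
    · rw [if_neg h]
      exact bE_succ T N hT δ q hq1 (δ n1) t (by omega) htT
  -- efficient consumption growth
  set s0 : Fin (T-1) := ⟨0, by omega⟩ with hs0def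
  have hs0 : (s0:ℕ) = 0 := rfl
  have hbB1 : bBdef T N δ p s0 n1 1 = p n1 := bB_one T N δ p hp1 s0 n1
  have hbBpos : ∀ t, 1 ≤ t → t ≤ T - 1 → 0 < bBdef T N δ p s0 n1 t := by
    intro t ht1 htT
    induction t, ht1 using Nat.le_induction with
    | base => rw [hbB1]; exact hp n1
    | succ n hn ih =>
      by_cases h : n = 1
      · rw [h, bB_two T N hT δ p hp1 s0 hs0 n1, hbB1]
        exact mul_pos (hδpos n1) (hp n1)
      · rw [bB_succ T N hT δ p hp1 s0 hs0 n1 n (by omega) (by omega)]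
        exact mul_pos hPbpos (ih (by omega))
  have hLB : ∀ t, LBdef T N p vB s0 n1 t = p n1 * cB t := by
    intro t
    rw [LB_eq_cB T N p hp1 vB s0 hs0 n1 t, ← hcB t]
  have hBchain : ∀ t, 1 ≤ t → t ≤ T - 1 →
      cB (t+1) = R * (if t = 1 then δ n1 else Pb) * cB t := by
    intro t ht1 htT
    have hfoc := Bfoc T N hT hN0 R I hR δ p hp s0 hs0 n1 vB hBfeas hBmax t ht1 htT
    rw [hLB, hLB] at hfoc
    have hchain := ratio_chain R hRpos (bBdef T N δ p s0 n1) (fun u => p n1 * cB u)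
      (if t = 1 then δ n1 else Pb) t ht1 ?_ (hbBpos t ht1 htT) ?_
    · have hpn1 : p n1 ≠ 0 := ne_of_gt (hp n1)
      apply mul_left_cancel₀ hpn1
      rw [hchain]; ring
    · rw [hfoc]
    · by_cases h : t = 1
      · rw [h, if_pos rfl, bB_two T N hT δ p hp1 s0 hs0 n1]
      · rw [if_neg h]
        exact bB_succ T N hT δ p hp1 s0 hs0 n1 t (by omega) htT
  -- ratios
  have hratE : ∀ t, 1 ≤ t → t ≤ T - 1 →
      cE (t+1) / cE t = R * (if t = 1 then δ n1 else Qb) := by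
    intro t ht1 htT
    rw [hEchain t ht1 htT, mul_div_assoc, div_self (ne_of_gt (hcEpos t)), mul_one]
  have hratB : ∀ t, 1 ≤ t → t ≤ T - 1 →
      cB (t+1) / cB t = R * (if t = 1 then δ n1 else Pb) := by
    intro t ht1 htT
    rw [hBchain t ht1 htT, mul_div_assoc, div_self (ne_of_gt (hcBpos t)), mul_one]
  refine ⟨?_, ?_, ?_⟩
  · intro t ht
    simp only [Finset.mem_Icc] at ht
    rw [hratE t ht.1 ht.2, hratB t ht.1 ht.2]
    by_cases h : t = 1
    · simp only [if_pos h]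
      exact le_refl _
    · simp only [if_neg h]
      exact mul_le_mul_of_nonneg_left hfosd.1 (le_of_lt hRpos)
  · intro hpq t ht
    simp only [Finset.mem_Icc] at ht
    rw [hratE t ht.1 ht.2, hratB t ht.1 ht.2]
    have hPQ : Pb = Qb := by rw [hPb, hQb, hpq]
    by_cases h : t = 1
    · simp only [if_pos h]
    · simp only [if_neg h]
      rw [hPQ]
  · intro hpq t ht
    simp only [Finset.mem_Icc] at ht
    have ht1 : 1 ≤ t := by omega
    rw [hratE t ht1 ht.2, hratB t ht1 ht.2]
    simp only [if_neg (show ¬ t = 1 by omega)]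
    exact mul_lt_mul_of_pos_left (hfosd.2 hpq) hRpos
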